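/- Let L be an invertible real 3×3 matrix, D a diagonal real 3×3 matrix, and h ∈ ℝ³. Then the function s ↦ 4 (det(Lᵀ exp(sD) L))^{1/2} · hᵀ (Lᵀ exp(sD) L)⁻¹ h is convex on ℝ (here exp denotes the matrix exponential). -/

import Mathlib

open MeasureTheory Matrix Real Filter Topology Set Asymptotics

noncomputable section

/-- 3×3 real matrices; symmetric ones form `Sym3`, encoded via `Matrix.IsSymm`/`Matrix.PosDef`. -/
abbrev Mat3 := Matrix (Fin 3) (Fin 3) ℝ

/-- vectors in ℝ³ -/
abbrev Vec3 := Fin 3 → ℝ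

/-- Euclidean norm on ℝ³. -/
def enorm3 (p : Vec3) : ℝ := Real.sqrt (∑ i, p i ^ 2)

/-- the quadratic form pᵀBp. -/
def quadForm (B : Mat3) (p : Vec3) : ℝ := p ⬝ᵥ B.mulVec p

/-- Ψ(B)_{ij} = 4π (det B)^{1/2} ∫ (pᵀBp)^{−1/2} p_i p_j f(p) dp. -/
def PsiM (f : Vec3 → ℝ) (B : Mat3) : Mat3 :=
  Matrix.of fun i j =>
    (4 * π) * Real.sqrt B.det * ∫ p : Vec3, (Real.sqrt (quadForm B p))⁻¹ * (p i * p j * f p)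

/-- χ_b(k)_{ij} = 4π (det b)^{1/2} ∫ (pᵀbp)^{−3/2} ((bp)ᵀ k (bp)) p_i p_j f(p) dp. -/
def chiM (f : Vec3 → ℝ) (b : Mat3) (k : Mat3) : Mat3 :=
  Matrix.of fun i j =>
    (4 * π) * Real.sqrt b.det *
      ∫ p : Vec3, ((Real.sqrt (quadForm b p))⁻¹ ^ 3) * (quadForm k (b.mulVec p) * (p i * p j * f p))

/-- With u = ah, w = kh, α = hᵀah and b = a⁻¹:
M_a(k) = (2/det a)((hᵀkh) a + α k − 2(u wᵀ + w uᵀ) + tr(bk)(2 u uᵀ − α a)). -/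
def MM (a : Mat3) (h : Vec3) (k : Mat3) : Mat3 :=
  (2 / a.det) • ((h ⬝ᵥ k.mulVec h) • a + (h ⬝ᵥ a.mulVec h) • k
    - (2:ℝ) • (vecMulVec (a.mulVec h) (k.mulVec h) + vecMulVec (k.mulVec h) (a.mulVec h))
    + (a⁻¹ * k).trace • ((2:ℝ) • vecMulVec (a.mulVec h) (a.mulVec h) - (h ⬝ᵥ a.mulVec h) • a))

/-- The Fuchsian condition at B (with A = B⁻¹):
2Ψ(B) = A − (2/det A)((hᵀAh) A − 2 (Ah)(Ah)ᵀ). -/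
def FuchsCond (f : Vec3 → ℝ) (h : Vec3) (B : Mat3) : Prop :=
  (2:ℝ) • PsiM f B =
    B⁻¹ - (2 / (B⁻¹).det) •
      ((h ⬝ᵥ (B⁻¹).mulVec h) • B⁻¹ - (2:ℝ) • vecMulVec ((B⁻¹).mulVec h) ((B⁻¹).mulVec h))

/-- F(B) = 16π ∫ (pᵀBp)^{1/2} f dp + 2 (det B)^{−1/2} + 4 (det B)^{1/2} hᵀB⁻¹h. -/
def Ffun (f : Vec3 → ℝ) (h : Vec3) (B : Mat3) : ℝ :=
  16 * π * (∫ p : Vec3, Real.sqrt (quadForm B p) * f p)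
    + 2 * (Real.sqrt B.det)⁻¹ + 4 * Real.sqrt B.det * (h ⬝ᵥ (B⁻¹).mulVec h)


private lemma convexOn_finset_sum {ι : Type*} (t : Finset ι) (g : ι → ℝ → ℝ)
    (hg : ∀ i ∈ t, ConvexOn ℝ (Set.univ : Set ℝ) (g i)) :
    ConvexOn ℝ Set.univ (fun s => ∑ i ∈ t, g i s) := by
  classical
  induction t using Finset.induction with
  | empty => simpa using convexOn_const (0 : ℝ) convex_univ
  | insert _ _ hnot ih =>
      simp only [Finset.sum_insert hnot]
      exact (hg _ (Finset.mem_insert_self _ _)).add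
        (ih fun i hi => hg i (Finset.mem_insert_of_mem hi))

private lemma convexOn_mul_exp (c a : ℝ) (hc : 0 ≤ c) :
    ConvexOn ℝ Set.univ (fun s : ℝ => c * Real.exp (a * s)) := by
  have h1 : ConvexOn ℝ Set.univ (fun s : ℝ => Real.exp (a * s)) := by
    have := convexOn_exp.comp_affineMap
      (LinearMap.toAffineMap (a • (LinearMap.id : ℝ →ₗ[ℝ] ℝ)))
    simpa [Function.comp_def, smul_eq_mul] using this
  have := h1.smul hc
  simpa [smul_eq_mul] using this

/-- geodesic convexity of the magnetic term of F:
s ↦ 4 (det(Lᵀ exp(sD) L))^{1/2} hᵀ(Lᵀ exp(sD) L)⁻¹h is convex on ℝ. -/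
theorem magnetic_term_geodesically_convex (L D : Mat3) (h : Vec3)
    (hL : IsUnit L) (hD : D.IsDiag) :
    ConvexOn ℝ Set.univ
      (fun s : ℝ => 4 * Real.sqrt (Lᵀ * NormedSpace.exp (s • D) * L).det
        * (h ⬝ᵥ ((Lᵀ * NormedSpace.exp (s • D) * L)⁻¹).mulVec h)) := by
  obtain ⟨d, rfl⟩ : ∃ d, Matrix.diagonal d = D := ⟨_, hD.diagonal_diag⟩
  set w : Vec3 := Matrix.vecMul h L⁻¹ with hw
  set T : ℝ := (∑ i, d i) / 2 with hT
  have key : ∀ s : ℝ,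
      4 * Real.sqrt (Lᵀ * NormedSpace.exp (s • Matrix.diagonal d) * L).det
        * (h ⬝ᵥ ((Lᵀ * NormedSpace.exp (s • Matrix.diagonal d) * L)⁻¹).mulVec h)
      = ∑ i, (4 * |L.det| * w i ^ 2) * Real.exp ((T - d i) * s) := by
    intro s
    set e : Fin 3 → ℝ := fun i => Real.exp (s * d i) with he
    have hE : NormedSpace.exp (s • Matrix.diagonal d) = Matrix.diagonal e := by
      have hpe : NormedSpace.exp (s • d) = e := by
        funext i
        rw [Pi.coe_exp, Pi.smul_apply, smul_eq_mul, ← Real.exp_eq_exp_ℝ]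
      rw [← Matrix.diagonal_smul, Matrix.exp_diagonal, hpe]
    have hdet : (Lᵀ * Matrix.diagonal e * L).det = L.det ^ 2 * Real.exp (s * ∑ i, d i) := by
      rw [Matrix.det_mul, Matrix.det_mul, Matrix.det_transpose, Matrix.det_diagonal]
      have : ∏ i, e i = Real.exp (s * ∑ i, d i) := by
        rw [Finset.mul_sum, Real.exp_sum]
      rw [this]; ring
    have hsqrt : Real.sqrt (Lᵀ * Matrix.diagonal e * L).det = |L.det| * Real.exp (T * s) := by
      rw [hdet, Real.sqrt_mul (sq_nonneg _), Real.sqrt_sq_eq_abs]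
      congr 1
      have h2 : Real.exp (s * ∑ i, d i) = Real.exp (T * s) ^ 2 := by
        rw [sq, ← Real.exp_add, hT]; ring_nf
      rw [h2, Real.sqrt_sq (Real.exp_nonneg _)]
    have hEinv : (Matrix.diagonal e)⁻¹ = Matrix.diagonal (fun i => (e i)⁻¹) := by
      apply Matrix.inv_eq_right_inv
      rw [Matrix.diagonal_mul_diagonal]
      have : (fun i => e i * (e i)⁻¹) = fun _ : Fin 3 => (1 : ℝ) := by
        funext i
        exact mul_inv_cancel₀ (Real.exp_ne_zero _)
      rw [this, Matrix.diagonal_one]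
    have hquad : h ⬝ᵥ ((Lᵀ * Matrix.diagonal e * L)⁻¹).mulVec h
        = ∑ i, w i * ((e i)⁻¹ * w i) := by
      rw [Matrix.mul_inv_rev, Matrix.mul_inv_rev, hEinv, ← Matrix.transpose_nonsing_inv,
        ← Matrix.mulVec_mulVec, ← Matrix.mulVec_mulVec, Matrix.dotProduct_mulVec,
        Matrix.mulVec_transpose, ← hw]
      simp [dotProduct, Matrix.mulVec_diagonal]
    rw [hE, hsqrt, hquad, Finset.mul_sum]
    refine Finset.sum_congr rfl fun i _ => ?_
    rw [he]
    have : (Real.exp (s * d i))⁻¹ = Real.exp (-(s * d i)) := (Real.exp_neg _).symm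
    rw [this]
    rw [show (T - d i) * s = T * s + -(s * d i) by ring, Real.exp_add]
    ring
  have hconv := convexOn_finset_sum (Finset.univ : Finset (Fin 3))
    (fun i s => (4 * |L.det| * w i ^ 2) * Real.exp ((T - d i) * s))
    (fun i _ => convexOn_mul_exp _ _ (by positivity))
  have heq : (fun s : ℝ => 4 * Real.sqrt (Lᵀ * NormedSpace.exp (s • Matrix.diagonal d) * L).det
        * (h ⬝ᵥ ((Lᵀ * NormedSpace.exp (s • Matrix.diagonal d) * L)⁻¹).mulVec h))
      = fun s => ∑ i, (4 * |L.det| * w i ^ 2) * Real.exp ((T - d i) * s) := funext key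
  rw [heq]
  exact hconv
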